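/- Let X, Z ∈ ℝ^{d×r} with XᵀX invertible, and suppose max_i g_i(X) ≤ g_max where g_i(X) = e_iᵀX(XᵀX)^{−1}Xᵀe_i. Then for SG(X) = 2d²·(XXᵀ−ZZᵀ)_{ij}·(e_ie_jᵀ + e_je_iᵀ)X with (i,j) uniform on [d]², the second moment satisfies E[(‖SG(X)‖_X*)²] ≤ 16·d²·g_max·‖XXᵀ−ZZᵀ‖_F², where ‖V‖_X* = ‖V(XᵀX)^{−1/2}‖_F. -/

import Mathlib

open Matrix BigOperators

noncomputable section

/-- Frobenius norm of a real matrix. -/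
def frob {m n : ℕ} (A : Matrix (Fin m) (Fin n) ℝ) : ℝ :=
  Real.sqrt (∑ i, ∑ j, (A i j) ^ 2)

/-- Trace inner product `⟨A,B⟩ = tr(AᵀB)`. -/
def mip {m n : ℕ} (A B : Matrix (Fin m) (Fin n) ℝ) : ℝ := (Aᵀ * B).trace

open Classical in
/-- Smallest eigenvalue of a Hermitian matrix (junk value 0 otherwise). -/
def lammin {n : ℕ} (M : Matrix (Fin n) (Fin n) ℝ) : ℝ :=
  if h : M.IsHermitian then ⨅ i, h.eigenvalues i else 0

open scoped ComplexOrder in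
/-- The positive semidefinite square root, as defined in the older Mathlib (removed since). -/
def Matrix.PosSemidef.sqrt {𝕜 : Type*} [RCLike 𝕜] {n : Type*} [Fintype n] [DecidableEq n]
    {A : Matrix n n 𝕜} (hA : A.PosSemidef) : Matrix n n 𝕜 :=
  hA.1.eigenvectorUnitary.1 * diagonal ((↑) ∘ (√·) ∘ hA.1.eigenvalues) *
  (star hA.1.eigenvectorUnitary : Matrix n n 𝕜)

/-- Local norm `‖V‖_X = ‖V (XᵀX)^{1/2}‖_F`. -/
def locNorm {d r : ℕ} (X V : Matrix (Fin d) (Fin r) ℝ) : ℝ :=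
  frob (V * (Matrix.posSemidef_conjTranspose_mul_self X).sqrt)

/-- Dual local norm `‖V‖_X* = ‖V (XᵀX)^{-1/2}‖_F`. -/
def dualNorm {d r : ℕ} (X V : Matrix (Fin d) (Fin r) ℝ) : ℝ :=
  frob (V * ((Matrix.posSemidef_conjTranspose_mul_self X).sqrt)⁻¹)

/-- Leverage score / coherence `g_k(X) = e_kᵀ X (XᵀX)⁻¹ Xᵀ e_k`. -/
def lev {d r : ℕ} (k : Fin d) (X : Matrix (Fin d) (Fin r) ℝ) : ℝ :=
  (X * (Xᴴ * X)⁻¹ * Xᴴ) k k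

/-- Gradient of the leverage score `∇g_k(X)`. -/
def levGrad {d r : ℕ} (k : Fin d) (X : Matrix (Fin d) (Fin r) ℝ) :
    Matrix (Fin d) (Fin r) ℝ :=
  (2 : ℝ) • ((1 - X * (Xᴴ * X)⁻¹ * Xᴴ) * Matrix.single k k (1 : ℝ) * X * (Xᴴ * X)⁻¹)

/-- Stochastic gradient sample `SG(X)` for the index pair `(i,j)`. -/
def SG {d r : ℕ} (X Z : Matrix (Fin d) (Fin r) ℝ) (i j : Fin d) :
    Matrix (Fin d) (Fin r) ℝ :=
  (2 * (d : ℝ) ^ 2 * ((X * Xᴴ - Z * Zᴴ) i j)) •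
    ((Matrix.single i j (1 : ℝ) + Matrix.single j i (1 : ℝ)) * X)


open scoped ComplexOrder in
lemma psd_sqrt_herm {n : ℕ} {A : Matrix (Fin n) (Fin n) ℝ} (hA : A.PosSemidef) :
    (hA.sqrt)ᴴ = hA.sqrt := by
  simp only [Matrix.PosSemidef.sqrt, Matrix.conjTranspose_mul, Matrix.mul_assoc, Matrix.star_eq_conjTranspose,
    Matrix.conjTranspose_conjTranspose, Matrix.diagonal_conjTranspose]
  congr 2

open scoped ComplexOrder in
lemma psd_sqrt_mul_self {n : ℕ} {A : Matrix (Fin n) (Fin n) ℝ} (hA : A.PosSemidef) :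
    hA.sqrt * hA.sqrt = A := by
  conv_rhs => rw [hA.1.spectral_theorem, Unitary.conjStarAlgAut_apply]
  have hU : (star hA.1.eigenvectorUnitary : Matrix (Fin n) (Fin n) ℝ) * hA.1.eigenvectorUnitary.1 = 1 :=
    Unitary.star_mul_self_of_mem hA.1.eigenvectorUnitary.2
  simp only [Matrix.PosSemidef.sqrt, Matrix.mul_assoc]
  rw [← Matrix.mul_assoc (star _ : Matrix _ _ ℝ) _ _, hU, Matrix.one_mul, ← Matrix.mul_assoc (diagonal _), diagonal_mul_diagonal]
  congr 3
  funext i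
  simp [Real.mul_self_sqrt (hA.eigenvalues_nonneg i)]

attribute [local instance] Matrix.frobeniusSeminormedAddCommGroup Matrix.frobeniusNormedSpace

lemma frob_eq_norm {m n : ℕ} (A : Matrix (Fin m) (Fin n) ℝ) : frob A = ‖A‖ := by
  rw [Matrix.frobenius_norm_def, frob, ← Real.sqrt_eq_rpow]
  congr 1
  simp [Real.rpow_two, Real.norm_eq_abs, sq_abs]

lemma frob_sq {m n : ℕ} (A : Matrix (Fin m) (Fin n) ℝ) :
    frob A ^ 2 = ∑ i, ∑ j, (A i j) ^ 2 := by
  rw [frob, Real.sq_sqrt]; positivity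

lemma frob_add_le {m n : ℕ} (A B : Matrix (Fin m) (Fin n) ℝ) :
    frob (A + B) ≤ frob A + frob B := by
  simp only [frob_eq_norm]; exact norm_add_le _ _

lemma frob_smul {m n : ℕ} (c : ℝ) (A : Matrix (Fin m) (Fin n) ℝ) :
    frob (c • A) = |c| * frob A := by
  simp only [frob_eq_norm, norm_smul, Real.norm_eq_abs]

lemma frob_nonneg {m n : ℕ} (A : Matrix (Fin m) (Fin n) ℝ) : 0 ≤ frob A :=
  Real.sqrt_nonneg _

lemma single_mul_entry {d r : ℕ} (i j k : Fin d) (l : Fin r) (Y : Matrix (Fin d) (Fin r) ℝ) :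
    (Matrix.single i j (1:ℝ) * Y) k l = if k = i then Y j l else 0 := by
  simp [Matrix.mul_apply, Matrix.single, ite_and, eq_comm]

lemma single_mul_frob_sq {d r : ℕ} (i j : Fin d) (Y : Matrix (Fin d) (Fin r) ℝ) :
    frob (Matrix.single i j (1:ℝ) * Y) ^ 2 = ∑ l, (Y j l) ^ 2 := by
  rw [frob_sq]
  simp [single_mul_entry, apply_ite (· ^ (2:ℕ)), Finset.sum_ite_eq]

lemma lev_eq_sum {d r : ℕ} (k : Fin d) (X : Matrix (Fin d) (Fin r) ℝ) :
    lev k X = ∑ l, ((X * ((Matrix.posSemidef_conjTranspose_mul_self X).sqrt)⁻¹) k l) ^ 2 := by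
  set S := (Matrix.posSemidef_conjTranspose_mul_self X).sqrt with hSdef
  have hSH : Sᴴ = S := psd_sqrt_herm (Matrix.posSemidef_conjTranspose_mul_self X)
  have hSS : S * S = Xᴴ * X := psd_sqrt_mul_self (Matrix.posSemidef_conjTranspose_mul_self X)
  have hinv : (Xᴴ * X)⁻¹ = S⁻¹ * S⁻¹ := by rw [← hSS, Matrix.mul_inv_rev]
  have hYH : (X * S⁻¹)ᴴ = S⁻¹ * Xᴴ := by
    rw [Matrix.conjTranspose_mul, Matrix.conjTranspose_nonsing_inv, hSH]
  have key : X * (Xᴴ * X)⁻¹ * Xᴴ = (X * S⁻¹) * (X * S⁻¹)ᴴ := by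
    rw [hYH, hinv, ← Matrix.mul_assoc, ← Matrix.mul_assoc]
  rw [lev, key, Matrix.mul_apply]
  simp [Matrix.conjTranspose_apply, sq]

/-- Second-moment bound on the stochastic gradient in the dual local norm. -/
theorem SG_second_moment {d r : ℕ} (X Z : Matrix (Fin d) (Fin r) ℝ) (gmax : ℝ)
    (hX : IsUnit (Xᴴ * X).det) (hg : ∀ i, lev i X ≤ gmax) :
    ((d : ℝ) ^ 2)⁻¹ * ∑ i : Fin d, ∑ j : Fin d, dualNorm X (SG X Z i j) ^ 2
      ≤ 16 * (d : ℝ) ^ 2 * gmax * frob (X * Xᴴ - Z * Zᴴ) ^ 2 := by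

  rcases Nat.eq_zero_or_pos d with hd | hd
  · subst hd; simp
  set S := ((Matrix.posSemidef_conjTranspose_mul_self X).sqrt) with hS
  set Y := X * S⁻¹ with hY
  set M := X * Xᴴ - Z * Zᴴ with hM
  have hlev : ∀ k, ∑ l, (Y k l) ^ 2 ≤ gmax := fun k => (lev_eq_sum k X) ▸ hg k
  have hgnn : 0 ≤ gmax := le_trans (by rw [lev_eq_sum]; positivity) (hg ⟨0, hd⟩)
  have hone : ∀ i j : Fin d,
      frob ((Matrix.single i j (1:ℝ) + Matrix.single j i 1) * Y) ^ 2
        ≤ 4 * gmax := by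
    intro i j
    have hpart : ∀ a b : Fin d, frob (Matrix.single a b (1:ℝ) * Y) ≤ Real.sqrt gmax := by
      intro a b
      rw [show frob (Matrix.single a b (1:ℝ) * Y)
            = Real.sqrt (frob (Matrix.single a b (1:ℝ) * Y) ^ 2) from
          (Real.sqrt_sq (frob_nonneg _)).symm]
      exact Real.sqrt_le_sqrt (by rw [single_mul_frob_sq]; exact hlev b)
    have htri : frob ((Matrix.single i j (1:ℝ) + Matrix.single j i 1) * Y)
        ≤ 2 * Real.sqrt gmax := by
      rw [Matrix.add_mul]
      calc frob (Matrix.single i j (1:ℝ) * Y + Matrix.single j i 1 * Y)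
          ≤ frob (Matrix.single i j (1:ℝ) * Y) + frob (Matrix.single j i (1:ℝ) * Y) :=
            frob_add_le _ _
        _ ≤ 2 * Real.sqrt gmax := by linarith [hpart i j, hpart j i]
    calc frob ((Matrix.single i j (1:ℝ) + Matrix.single j i 1) * Y) ^ 2
        ≤ (2 * Real.sqrt gmax) ^ 2 := by
          exact pow_le_pow_left₀ (frob_nonneg _) htri 2
      _ = 4 * gmax := by rw [mul_pow, Real.sq_sqrt hgnn]; ring
  have hterm : ∀ i j : Fin d, dualNorm X (SG X Z i j) ^ 2
      ≤ 16 * (d : ℝ) ^ 4 * gmax * (M i j) ^ 2 := by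
    intro i j
    have hrw : dualNorm X (SG X Z i j)
        = |2 * (d : ℝ) ^ 2 * (M i j)| *
          frob ((Matrix.single i j (1:ℝ) + Matrix.single j i 1) * Y) := by
      rw [dualNorm, SG, Matrix.smul_mul, frob_smul, Matrix.mul_assoc, ← hM, ← hY]
    rw [hrw, mul_pow, sq_abs]
    calc (2 * (d : ℝ) ^ 2 * M i j) ^ 2 *
          frob ((Matrix.single i j (1:ℝ) + Matrix.single j i 1) * Y) ^ 2
        ≤ (2 * (d : ℝ) ^ 2 * M i j) ^ 2 * (4 * gmax) := by
          exact mul_le_mul_of_nonneg_left (hone i j) (sq_nonneg _)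
      _ = 16 * (d : ℝ) ^ 4 * gmax * (M i j) ^ 2 := by ring
  have hsum : ∑ i : Fin d, ∑ j : Fin d, dualNorm X (SG X Z i j) ^ 2
      ≤ 16 * (d : ℝ) ^ 4 * gmax * frob M ^ 2 := by
    rw [frob_sq, Finset.mul_sum]
    refine Finset.sum_le_sum fun i _ => ?_
    rw [Finset.mul_sum]
    exact Finset.sum_le_sum fun j _ => hterm i j
  calc ((d : ℝ) ^ 2)⁻¹ * ∑ i : Fin d, ∑ j : Fin d, dualNorm X (SG X Z i j) ^ 2
      ≤ ((d : ℝ) ^ 2)⁻¹ * (16 * (d : ℝ) ^ 4 * gmax * frob M ^ 2) :=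
        mul_le_mul_of_nonneg_left hsum (by positivity)
    _ = 16 * (d : ℝ) ^ 2 * gmax * frob M ^ 2 := by
        have hdpos : (0:ℝ) < (d : ℝ) ^ 2 := by positivity
        field_simp
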